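/- For D ≥ 1, the abelianization H_1 of the commutator subgroup [G,G] of G = ℤ/Dℤ * ℤ/Dℤ (free product) is the quotient of the free abelian group on generators c_{ij}, 1 ≤ i,j ≤ D-1, with no relations; i.e., the kernel K of the abelianization map ℤ/Dℤ * ℤ/Dℤ → ℤ/Dℤ × ℤ/Dℤ is a free group freely generated by the commutators [ã^i, b̃^j] for 1 ≤ i,j ≤ D-1, where ã, b̃ generate the two free factors. -/

import Mathlib

open Monoid
open scoped commutatorElement

section Aux

variable (D : ℕ) [NeZero D]

private abbrev GG := Coprod (Multiplicative (ZMod D)) (Multiplicative (ZMod D))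
private abbrev SS := Fin (D - 1) × Fin (D - 1)
private abbrev XX := FreeGroup (SS D) × ZMod D × ZMod D

private def AA (k : ZMod D) : GG D := Coprod.inl (Multiplicative.ofAdd k)
private def BB (k : ZMod D) : GG D := Coprod.inr (Multiplicative.ofAdd k)

private lemma AA_mul (k l : ZMod D) : AA D k * AA D l = AA D (k + l) := by
  simp [AA, ← map_mul, ← ofAdd_add]

private lemma BB_mul (k l : ZMod D) : BB D k * BB D l = BB D (k + l) := by
  simp [BB, ← map_mul, ← ofAdd_add]

private lemma AA_inv (k : ZMod D) : (AA D k)⁻¹ = AA D (-k) := by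
  simp [AA, ← map_inv, ← ofAdd_neg]

private lemma BB_inv (k : ZMod D) : (BB D k)⁻¹ = BB D (-k) := by
  simp [BB, ← map_inv, ← ofAdd_neg]

private lemma AA_zero : AA D 0 = 1 := by simp [AA]
private lemma BB_zero : BB D 0 = 1 := by simp [BB]

private def UU (i j : ZMod D) : FreeGroup (SS D) :=
  if h : i = 0 ∨ j = 0 then 1
  else FreeGroup.of
    (⟨i.val - 1, by
      have h1 : i.val ≠ 0 := fun hh => h (Or.inl ((ZMod.val_eq_zero i).mp hh))
      have h2 := ZMod.val_lt i; omega⟩,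
     ⟨j.val - 1, by
      have h1 : j.val ≠ 0 := fun hh => h (Or.inr ((ZMod.val_eq_zero j).mp hh))
      have h2 := ZMod.val_lt j; omega⟩)

private lemma UU_zero_left (j : ZMod D) : UU D 0 j = 1 := dif_pos (Or.inl rfl)
private lemma UU_zero_right (i : ZMod D) : UU D i 0 = 1 := dif_pos (Or.inr rfl)

private def Fw (m i j : ZMod D) : FreeGroup (SS D) :=
  (UU D (-i) (-(j + m)))⁻¹ * UU D (-i) (-j)

private lemma Fw_zero (i j : ZMod D) : Fw D 0 i j = 1 := by
  simp [Fw]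

private lemma Fw_add (m m' i j : ZMod D) :
    Fw D m i (j + m') * Fw D m' i j = Fw D (m + m') i j := by
  unfold Fw
  rw [show j + m' + m = j + (m + m') by ring]
  group

private lemma Fw_zero_left (m j : ZMod D) : Fw D m 0 j = 1 := by
  simp [Fw, UU_zero_left]

/-- action of the first factor -/
private def phiA : Multiplicative (ZMod D) →* Equiv.Perm (XX D) where
  toFun m :=
    { toFun := fun x => (x.1, x.2.1 + m.toAdd, x.2.2)
      invFun := fun x => (x.1, x.2.1 - m.toAdd, x.2.2)
      left_inv := fun x => by simp
      right_inv := fun x => by simp }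
  map_one' := by ext x <;> simp
  map_mul' m m' := by
    ext x <;> simp [Equiv.Perm.mul_apply] <;> ring

/-- action of the second factor -/
private def phiB : Multiplicative (ZMod D) →* Equiv.Perm (XX D) where
  toFun m :=
    { toFun := fun x => (Fw D m.toAdd x.2.1 x.2.2 * x.1, x.2.1, x.2.2 + m.toAdd)
      invFun := fun x => (Fw D (-m.toAdd) x.2.1 x.2.2 * x.1, x.2.1, x.2.2 - m.toAdd)
      left_inv := fun x => by
        simp only [← mul_assoc]
        rw [show x.2.2 + m.toAdd = x.2.2 + m.toAdd by rfl]
        have h := Fw_add D (-m.toAdd) m.toAdd x.2.1 x.2.2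
        simp only [neg_add_cancel] at h
        rw [h, Fw_zero, one_mul]
        simp
      right_inv := fun x => by
        simp only [← mul_assoc]
        have h := Fw_add D m.toAdd (-m.toAdd) x.2.1 x.2.2
        simp only [add_neg_cancel] at h
        rw [show x.2.2 - m.toAdd = x.2.2 + -m.toAdd by ring, h, Fw_zero, one_mul]
        simp }
  map_one' := by
    ext x <;> simp [Fw_zero]
  map_mul' m m' := by
    apply Equiv.ext
    intro x
    simp only [Equiv.Perm.mul_apply, Equiv.coe_fn_mk, toAdd_mul, ← mul_assoc]
    rw [show x.2.2 + (m.toAdd + m'.toAdd) = x.2.2 + m'.toAdd + m.toAdd by ring]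
    rw [Fw_add, add_comm m.toAdd m'.toAdd]

private def TT : GG D →* Equiv.Perm (XX D) := Coprod.lift (phiA D) (phiB D)

private lemma TT_AA (k : ZMod D) (x : XX D) :
    TT D (AA D k) x = (x.1, x.2.1 + k, x.2.2) := by
  simp [TT, AA, Coprod.lift_apply_inl, phiA]

private lemma TT_BB (k : ZMod D) (x : XX D) :
    TT D (BB D k) x = (Fw D k x.2.1 x.2.2 * x.1, x.2.1, x.2.2 + k) := by
  simp [TT, BB, Coprod.lift_apply_inr, phiB]

private def ee : FreeGroup (SS D) →* GG D :=
  FreeGroup.lift fun ij => ⁅AA D (((ij.1 : ℕ) + 1 : ℕ) : ZMod D), BB D (((ij.2 : ℕ) + 1 : ℕ) : ZMod D)⁆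

private lemma ee_UU (i j : ZMod D) : ee D (UU D i j) = ⁅AA D i, BB D j⁆ := by
  unfold UU
  split
  · rename_i h
    rcases h with h | h <;> subst h <;>
      simp [AA_zero, BB_zero, commutatorElement_one_left, commutatorElement_one_right]
  · rename_i h
    push_neg at h
    obtain ⟨hi, hj⟩ := h
    have hiv : i.val ≠ 0 := (ZMod.val_eq_zero i).not.mpr hi
    have hjv : j.val ≠ 0 := (ZMod.val_eq_zero j).not.mpr hj
    have e1 : (((i.val - 1) + 1 : ℕ) : ZMod D) = i := by
      rw [Nat.sub_add_cancel (by omega), ZMod.natCast_val, ZMod.cast_id]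
    have e2 : (((j.val - 1) + 1 : ℕ) : ZMod D) = j := by
      rw [Nat.sub_add_cancel (by omega), ZMod.natCast_val, ZMod.cast_id]
    rw [ee, FreeGroup.lift_apply_of]
    show ⁅AA D (((i.val - 1) + 1 : ℕ) : ZMod D), BB D (((j.val - 1) + 1 : ℕ) : ZMod D)⁆ = _
    rw [e1, e2]

end Aux

/-- The kernel of the abelianization map `ℤ/D * ℤ/D → ℤ/D × ℤ/D` from the free product
of two cyclic groups of order `D` is a free group, freely generated by the commutators
`[ã^i, b̃^j]` for `1 ≤ i, j ≤ D-1`, where `ã, b̃` are the generators of the two factors. -/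
theorem kernel_free_product_abelianization_free (D : ℕ) (hD : 1 ≤ D)
    (ta tb : Coprod (Multiplicative (ZMod D)) (Multiplicative (ZMod D)))
    (hta : ta = Coprod.inl (Multiplicative.ofAdd (1 : ZMod D)))
    (htb : tb = Coprod.inr (Multiplicative.ofAdd (1 : ZMod D)))
    (f : Coprod (Multiplicative (ZMod D)) (Multiplicative (ZMod D)) →*
      Multiplicative (ZMod D) × Multiplicative (ZMod D))
    (hf : f = Coprod.lift
      (MonoidHom.inl (Multiplicative (ZMod D)) (Multiplicative (ZMod D)))
      (MonoidHom.inr (Multiplicative (ZMod D)) (Multiplicative (ZMod D)))) :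
    ∃ e : FreeGroup (Fin (D - 1) × Fin (D - 1)) →*
        Coprod (Multiplicative (ZMod D)) (Multiplicative (ZMod D)),
      Function.Injective e ∧
      (∀ ij : Fin (D - 1) × Fin (D - 1),
        e (FreeGroup.of ij) = ⁅ta ^ ((ij.1 : ℕ) + 1), tb ^ ((ij.2 : ℕ) + 1)⁆) ∧
      e.range = f.ker := by
  haveI : NeZero D := ⟨by omega⟩
  -- powers of ta, tb
  have ta_pow : ∀ n : ℕ, ta ^ n = AA D (n : ZMod D) := by
    intro n
    rw [hta]
    show (Coprod.inl : Multiplicative (ZMod D) →* GG D) (Multiplicative.ofAdd 1) ^ n = _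
    rw [← map_pow, AA]
    congr 1
    rw [← ofAdd_nsmul]
    congr 1
    simp
  have tb_pow : ∀ n : ℕ, tb ^ n = BB D (n : ZMod D) := by
    intro n
    rw [htb]
    show (Coprod.inr : Multiplicative (ZMod D) →* GG D) (Multiplicative.ofAdd 1) ^ n = _
    rw [← map_pow, BB]
    congr 1
    rw [← ofAdd_nsmul]
    congr 1
    simp
  have ta_val : ∀ k : ZMod D, ta ^ k.val = AA D k := by
    intro k; rw [ta_pow, ZMod.natCast_val, ZMod.cast_id]
  have tb_val : ∀ k : ZMod D, tb ^ k.val = BB D k := by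
    intro k; rw [tb_pow, ZMod.natCast_val, ZMod.cast_id]
  -- the embedding
  refine ⟨ee D, ?_, ?_, ?_⟩
  case refine_2 =>
    -- formula on generators
    intro ij
    rw [ee, FreeGroup.lift_apply_of, ta_pow, tb_pow]
  · -- injectivity
    -- key: action of e v on (w, 0, 0)
    have key : ∀ v : FreeGroup (SS D), ∀ w : FreeGroup (SS D),
        TT D (ee D v) (w, 0, 0) = (v * w, 0, 0) := by
      have gen : ∀ ij : SS D, ∀ w : FreeGroup (SS D),
          TT D (ee D (FreeGroup.of ij)) (w, 0, 0) = (FreeGroup.of ij * w, 0, 0) := by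
        intro ij w
        rw [ee, FreeGroup.lift_apply_of]
        set p : ZMod D := (((ij.1 : ℕ) + 1 : ℕ) : ZMod D) with hp
        set q : ZMod D := (((ij.2 : ℕ) + 1 : ℕ) : ZMod D) with hq
        have hpval : p.val = (ij.1 : ℕ) + 1 := by
          rw [hp, ZMod.val_cast_of_lt]; have := ij.1.2; omega
        have hqval : q.val = (ij.2 : ℕ) + 1 := by
          rw [hq, ZMod.val_cast_of_lt]; have := ij.2.2; omega
        have hpne : p ≠ 0 := by
          intro h; rw [h] at hpval; simp [ZMod.val_zero] at hpval
        have hqne : q ≠ 0 := by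
          intro h; rw [h] at hqval; simp [ZMod.val_zero] at hqval
        rw [commutatorElement_def, AA_inv, BB_inv]
        simp only [map_mul, Equiv.Perm.mul_apply, TT_AA, TT_BB]
        simp only [zero_add, Fw_zero_left, one_mul, neg_add_cancel]
        have h1 : Fw D q (-p) (-q) = UU D p q := by
          rw [Fw]
          simp only [neg_neg, neg_add_cancel, neg_zero, UU_zero_right, inv_one, one_mul]
        have h2 : UU D p q = FreeGroup.of ij := by
          rw [UU, dif_neg (by tauto)]
          refine congrArg _ (Prod.ext ?_ ?_) <;> apply Fin.ext <;>
            simp [hpval, hqval]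
        rw [h1, h2]
      intro v
      induction v using FreeGroup.induction_on with
      | C1 => intro w; simp
      | of ij => exact gen ij
      | inv_of ij ih =>
        intro w
        show ((TT D) ((ee D) ((FreeGroup.of ij)⁻¹))) (w, 0, 0) = ((FreeGroup.of ij)⁻¹ * w, 0, 0)
        have h := gen ij ((FreeGroup.of ij)⁻¹ * w)
        rw [mul_inv_cancel_left] at h
        rw [map_inv, map_inv, ← h, Equiv.Perm.inv_def, Equiv.symm_apply_apply]
      | mul v1 v2 ih1 ih2 =>
        intro w
        rw [map_mul, map_mul, Equiv.Perm.mul_apply, ih2, ih1, mul_assoc]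
    intro v v' h
    have h1 := key v 1
    rw [h, key v' 1] at h1
    simpa using (congrArg Prod.fst h1).symm
  · -- range = kernel
    -- section
    set s : XX D → GG D := fun x => ta ^ x.2.1.val * tb ^ x.2.2.val * ee D x.1 with hs
    have ee_Fw : ∀ m i j : ZMod D,
        ee D (Fw D m i j) = ⁅AA D (-i), BB D (-(j + m))⁆⁻¹ * ⁅AA D (-i), BB D (-j)⁆ := by
      intro m i j
      rw [Fw, map_mul, map_inv, ee_UU, ee_UU]
    have lemA : ∀ g : GG D, ∀ x : XX D, s (TT D g x) = g * s x := by
      intro g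
      induction g using Coprod.induction_on with
      | inl m =>
        intro x
        have hm : Coprod.inl m = AA D m.toAdd := by rw [AA]; rfl
        rw [hm, TT_AA, hs]
        simp only
        rw [ta_val, ta_val, add_comm, ← AA_mul]
        group
      | inr n =>
        intro x
        have hm : Coprod.inr n = BB D n.toAdd := by rw [BB]; rfl
        rw [hm, TT_BB, hs]
        simp only
        rw [ta_val, tb_val, tb_val, map_mul, ee_Fw]
        rw [show x.2.2 + Multiplicative.toAdd n = Multiplicative.toAdd n + x.2.2 from
          add_comm _ _]
        rw [← AA_inv, ← BB_inv, ← BB_inv, ← BB_mul]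
        rw [commutatorElement_def, commutatorElement_def]
        group
      | mul g1 g2 ih1 ih2 =>
        intro x
        rw [map_mul, Equiv.Perm.mul_apply, ih1, ih2, mul_assoc]
    have s_base : s (1, 0, 0) = 1 := by
      rw [hs]; simp [ZMod.val_zero]
    have f_ee : ∀ v, f (ee D v) = 1 := by
      have : f.comp (ee D) = 1 := by
        apply FreeGroup.ext_hom
        intro ij
        simp only [MonoidHom.comp_apply, MonoidHom.one_apply, ee, FreeGroup.lift_apply_of,
          map_commutatorElement]
        exact commutatorElement_eq_one_iff_commute.mpr (Commute.all _ _)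
      intro v
      exact DFunLike.congr_fun this v
    ext g
    constructor
    · rintro ⟨v, rfl⟩
      exact f_ee v
    · intro hg
      have hdec := lemA g (1, 0, 0)
      rw [s_base, mul_one] at hdec
      set x := TT D g (1, 0, 0) with hx
      -- compute f g from decomposition
      have hfg : f g = (Multiplicative.ofAdd x.2.1, Multiplicative.ofAdd x.2.2) := by
        have : g = s x := hdec.symm
        rw [this, hs]
        simp only
        rw [ta_val, tb_val, map_mul, map_mul, f_ee, mul_one, hf]
        rw [AA, BB, Coprod.lift_apply_inl, Coprod.lift_apply_inr]
        simp
      rw [MonoidHom.mem_ker] at hg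
      rw [hg] at hfg
      have h1 : x.2.1 = 0 := by
        have := congrArg Prod.fst hfg
        simpa using this.symm
      have h2 : x.2.2 = 0 := by
        have := congrArg Prod.snd hfg
        simpa using this.symm
      refine ⟨x.1, ?_⟩
      rw [← hdec, hs]
      simp only
      rw [h1, h2]
      simp [ZMod.val_zero]
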